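/- Structural lemma with sub-sampled gradient and Jacobian matching: let F be twice continuously differentiable on open convex D ⊇ X with x* ∈ X satisfying ⟨∇F(x*), z − x*⟩ ≥ 0 for z ∈ X. Let g : D → ℝᵖ be differentiable with Jacobian J_g, and let H : D → Sym(p) satisfy ‖H(u) − J_g(v)‖ ≤ T‖u − v‖ for u, v ∈ D, with λ_min(H(x*)) = μ* > 0 and ‖H(u) − H(x*)‖ ≤ Γ‖u − x*‖. If ‖x − x*‖ ≤ μ*/(2Γ) and x⁺ = argmin over X of ⟨g(x), z − x⟩ + ½(z − x)ᵀ H(x)(z − x), then ‖x⁺ − x*‖ ≤ 2‖∇F(x*) − g(x*)‖/μ* + (T/μ*)·‖x − x*‖². -/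

import Mathlib

open scoped RealInnerProductSpace

/-- Structural lemma with sub-sampled gradient and Jacobian matching: the approximate
gradient `g` has Jacobian `J_g` close to the scaling matrix `H(·)` in the sense
`‖H(u) − J_g(v)‖ ≤ T‖u − v‖`. -/
theorem structural_error_recursion_jacobian_matching {p : ℕ}
    (D X : Set (EuclideanSpace ℝ (Fin p)))
    (hD : IsOpen D) (hDconv : Convex ℝ D) (hXconv : Convex ℝ X) (hXD : X ⊆ D)
    (F : EuclideanSpace ℝ (Fin p) → ℝ)
    (gradF : EuclideanSpace ℝ (Fin p) → EuclideanSpace ℝ (Fin p))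
    (hessF : EuclideanSpace ℝ (Fin p) →
      (EuclideanSpace ℝ (Fin p) →L[ℝ] EuclideanSpace ℝ (Fin p)))
    (hgrad : ∀ u ∈ D, HasGradientAt F (gradF u) u)
    (hhess : ∀ u ∈ D, HasFDerivAt gradF (hessF u) u)
    (hhessCont : ContinuousOn hessF D)
    (g : EuclideanSpace ℝ (Fin p) → EuclideanSpace ℝ (Fin p))
    (Jg : EuclideanSpace ℝ (Fin p) →
      (EuclideanSpace ℝ (Fin p) →L[ℝ] EuclideanSpace ℝ (Fin p)))
    (hJg : ∀ u ∈ D, HasFDerivAt g (Jg u) u)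
    (xstar x xplus : EuclideanSpace ℝ (Fin p))
    (hxstarX : xstar ∈ X) (hxX : x ∈ X) (hxplusX : xplus ∈ X)
    (hVIstar : ∀ z ∈ X, 0 ≤ ⟪gradF xstar, z - xstar⟫)
    (T Γ μs : ℝ) (hT : 0 ≤ T) (hΓ : 0 < Γ) (hμs : 0 < μs)
    (Hmap : EuclideanSpace ℝ (Fin p) →
      (EuclideanSpace ℝ (Fin p) →L[ℝ] EuclideanSpace ℝ (Fin p)))
    (hHsym : ∀ u ∈ D, ∀ a b, ⟪Hmap u a, b⟫ = ⟪a, Hmap u b⟫)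
    (hHJ : ∀ u ∈ D, ∀ v ∈ D, ‖Hmap u - Jg v‖ ≤ T * ‖u - v‖)
    (hHlip : ∀ u ∈ D, ‖Hmap u - Hmap xstar‖ ≤ Γ * ‖u - xstar‖)
    (hHmin : ∀ v, μs * ‖v‖ ^ 2 ≤ ⟪v, Hmap xstar v⟫)
    (hclose : ‖x - xstar‖ ≤ μs / (2 * Γ))
    (hVI : ∀ z ∈ X, 0 ≤ ⟪g x + Hmap x (xplus - x), z - xplus⟫) :
    ‖xplus - xstar‖ ≤
      2 * ‖gradF xstar - g xstar‖ / μs + (T / μs) * ‖x - xstar‖ ^ 2 := by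
  set d := x - xstar with hd
  set e := xplus - xstar with he
  have hxD : x ∈ D := hXD hxX
  have hxsD : xstar ∈ D := hXD hxstarX
  -- Jacobian equals Hmap on D
  have hJH : ∀ v ∈ D, Jg v = Hmap v := by
    intro v hv
    have h := hHJ v hv v hv
    simp only [sub_self, norm_zero, mul_zero] at h
    exact (sub_eq_zero.mp (norm_le_zero_iff.mp h)).symm
  -- segment membership
  have hseg : ∀ t ∈ Set.Icc (0:ℝ) 1, xstar + t • d ∈ D := by
    intro t ht
    have h := hDconv hxsD hxD (by linarith [ht.2] : (0:ℝ) ≤ 1 - t) ht.1 (by ring)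
    have heq : xstar + t • d = (1 - t) • xstar + t • x := by
      rw [hd]; module
    rw [heq]; exact h
  -- derivative along segment
  have hderiv : ∀ t ∈ Set.Icc (0:ℝ) 1,
      HasDerivAt (fun s : ℝ => g (xstar + s • d)) (Jg (xstar + t • d) d) t := by
    intro t ht
    have hc : HasDerivAt (fun s : ℝ => xstar + s • d) d t := by
      simpa using ((hasDerivAt_id t).smul_const d).const_add xstar
    exact (hJg _ (hseg t ht)).comp_hasDerivAt t hc
  -- Lipschitz bound for the integrand
  have hlipb : ∀ s ∈ Set.Icc (0:ℝ) 1, ∀ t ∈ Set.Icc (0:ℝ) 1,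
      dist (Jg (xstar + s • d) d) (Jg (xstar + t • d) d)
        ≤ (T * ‖d‖ ^ 2) * dist s t := by
    intro s hs t ht
    have hu := hseg s hs
    have hv := hseg t ht
    rw [dist_eq_norm, dist_eq_norm]
    have h1 : Jg (xstar + s • d) d - Jg (xstar + t • d) d
        = (Jg (xstar + s • d) - Jg (xstar + t • d)) d := by simp
    rw [h1]
    calc ‖(Jg (xstar + s • d) - Jg (xstar + t • d)) d‖
        ≤ ‖Jg (xstar + s • d) - Jg (xstar + t • d)‖ * ‖d‖ :=
          ContinuousLinearMap.le_opNorm _ _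
      _ ≤ (T * ‖(xstar + s • d) - (xstar + t • d)‖) * ‖d‖ := by
          apply mul_le_mul_of_nonneg_right _ (norm_nonneg d)
          rw [hJH _ hu]
          exact hHJ _ hu _ hv
      _ = (T * ‖d‖ ^ 2) * |s - t| := by
          have : (xstar + s • d) - (xstar + t • d) = (s - t) • d := by module
          rw [this, norm_smul, Real.norm_eq_abs]; ring
      _ = (T * ‖d‖ ^ 2) * dist s t := by rw [Real.dist_eq]
  have hcont : ContinuousOn (fun t : ℝ => Jg (xstar + t • d) d) (Set.Icc 0 1) := by
    have hK : (0:ℝ) ≤ T * ‖d‖ ^ 2 := by positivity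
    have : LipschitzOnWith (Real.toNNReal (T * ‖d‖ ^ 2))
        (fun t : ℝ => Jg (xstar + t • d) d) (Set.Icc 0 1) := by
      apply LipschitzOnWith.of_dist_le_mul
      intro s hs t ht
      rw [Real.coe_toNNReal _ hK]
      exact hlipb s hs t ht
    exact this.continuousOn
  have hint : IntervalIntegrable (fun t : ℝ => Jg (xstar + t • d) d)
      MeasureTheory.volume 0 1 := by
    apply ContinuousOn.intervalIntegrable
    rwa [Set.uIcc_of_le (by norm_num : (0:ℝ) ≤ 1)]
  -- fundamental theorem of calculus
  have hftc : g x - g xstar = ∫ t in (0:ℝ)..1, Jg (xstar + t • d) d := by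
    have h := intervalIntegral.integral_eq_sub_of_hasDerivAt
      (f := fun s : ℝ => g (xstar + s • d))
      (f' := fun t : ℝ => Jg (xstar + t • d) d)
      (by intro t ht
          rw [Set.uIcc_of_le (by norm_num : (0:ℝ) ≤ 1)] at ht
          exact hderiv t ht) hint
    rw [h]
    show g x - g xstar = g (xstar + (1:ℝ) • d) - g (xstar + (0:ℝ) • d)
    have h1 : xstar + (1:ℝ) • d = x := by rw [hd]; module
    have h0 : xstar + (0:ℝ) • d = xstar := by module
    rw [h1, h0]
  -- Taylor-type estimate
  set w := g x - g xstar - Hmap x d with hw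
  have hwbound : ‖w‖ ≤ T / 2 * ‖d‖ ^ 2 := by
    have hconst : IntervalIntegrable (fun _ : ℝ => Hmap x d)
        MeasureTheory.volume 0 1 := intervalIntegrable_const
    have hHint : Hmap x d = ∫ _ in (0:ℝ)..1, Hmap x d := by simp
    have heqw : w = ∫ t in (0:ℝ)..1, (Jg (xstar + t • d) d - Hmap x d) := by
      rw [intervalIntegral.integral_sub hint hconst, hw, hftc,
        intervalIntegral.integral_const]
      simp
    rw [heqw]
    have hb : ∀ t ∈ Set.Ioc (0:ℝ) 1,
        ‖Jg (xstar + t • d) d - Hmap x d‖ ≤ T * ‖d‖ ^ 2 * (1 - t) := by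
      intro t ht
      have ht' : t ∈ Set.Icc (0:ℝ) 1 := ⟨le_of_lt ht.1, ht.2⟩
      have hv := hseg t ht'
      have h1 : Jg (xstar + t • d) d - Hmap x d
          = -((Hmap x - Jg (xstar + t • d)) d) := by simp
      rw [h1, norm_neg]
      calc ‖(Hmap x - Jg (xstar + t • d)) d‖
          ≤ ‖Hmap x - Jg (xstar + t • d)‖ * ‖d‖ :=
            ContinuousLinearMap.le_opNorm _ _
        _ ≤ (T * ‖x - (xstar + t • d)‖) * ‖d‖ :=
            mul_le_mul_of_nonneg_right (hHJ _ hxD _ hv) (norm_nonneg d)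
        _ = T * ‖d‖ ^ 2 * (1 - t) := by
            have h2 : x - (xstar + t • d) = (1 - t) • d := by rw [hd]; module
            rw [h2, norm_smul, Real.norm_eq_abs, abs_of_nonneg (by linarith [ht.2])]
            ring
    have hgval : ∫ t in (0:ℝ)..1, T * ‖d‖ ^ 2 * (1 - t) = T / 2 * ‖d‖ ^ 2 := by
      have h4 : ∫ t in (0:ℝ)..1, T * ‖d‖ ^ 2 * (1 - t)
          = T * ‖d‖ ^ 2 * ∫ t in (0:ℝ)..1, (1 - t) := by
        rw [intervalIntegral.integral_const_mul]
      rw [h4]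
      have h3 : ∫ t in (0:ℝ)..1, (1 - t) = 1 / 2 := by
        rw [intervalIntegral.integral_sub intervalIntegrable_const
          intervalIntegral.intervalIntegrable_id,
          integral_id, intervalIntegral.integral_const]
        norm_num
      rw [h3]; ring
    calc ‖∫ t in (0:ℝ)..1, (Jg (xstar + t • d) d - Hmap x d)‖
        ≤ |∫ t in (0:ℝ)..1, T * ‖d‖ ^ 2 * (1 - t)| := by
          apply intervalIntegral.norm_integral_le_abs_of_norm_le
          · filter_upwards [MeasureTheory.ae_restrict_mem measurableSet_Ioc] with t ht
            rw [Set.uIoc_of_le (by norm_num : (0:ℝ) ≤ 1)] at ht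
            exact hb t ht
          · exact (continuous_const.mul (continuous_const.sub
              continuous_id)).intervalIntegrable 0 1
      _ = T / 2 * ‖d‖ ^ 2 := by
          rw [hgval]
          exact abs_of_nonneg (by positivity)
  -- variational inequalities
  have h1 : ⟪g x + Hmap x (xplus - x), e⟫ ≤ 0 := by
    have hv := hVI xstar hxstarX
    have hx' : xstar - xplus = -e := by rw [he]; module
    rw [hx', inner_neg_right] at hv
    linarith
  have h2 : (0:ℝ) ≤ ⟪gradF xstar, e⟫ := hVIstar xplus hxplusX
  -- upper bound for the quadratic form
  have hsplit : Hmap x (xplus - x) = Hmap x e - Hmap x d := by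
    have : xplus - x = e - d := by rw [he, hd]; module
    rw [this, map_sub]
  have hA_up : ⟪Hmap x e, e⟫ ≤ ‖gradF xstar - g xstar‖ * ‖e‖ + (T / 2 * ‖d‖ ^ 2) * ‖e‖ := by
    rw [hsplit, inner_add_left, inner_sub_left] at h1
    have hid : Hmap x d - g x = (gradF xstar - g xstar) - w - gradF xstar := by
      rw [hw]; abel
    have h3 : ⟪Hmap x e, e⟫ ≤ ⟪Hmap x d - g x, e⟫ := by
      rw [inner_sub_left]; linarith
    rw [hid, inner_sub_left, inner_sub_left] at h3
    have h4 : ⟪gradF xstar - g xstar, e⟫ ≤ ‖gradF xstar - g xstar‖ * ‖e‖ :=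
      real_inner_le_norm _ _
    have h5 : -⟪w, e⟫ ≤ ‖w‖ * ‖e‖ := by
      have := real_inner_le_norm (-w) e
      rwa [inner_neg_left, norm_neg] at this
    have h6 : ‖w‖ * ‖e‖ ≤ (T / 2 * ‖d‖ ^ 2) * ‖e‖ :=
      mul_le_mul_of_nonneg_right hwbound (norm_nonneg e)
    linarith
  -- lower bound for the quadratic form
  have hA_low : μs / 2 * ‖e‖ ^ 2 ≤ ⟪Hmap x e, e⟫ := by
    have h3 : μs * ‖e‖ ^ 2 ≤ ⟪Hmap xstar e, e⟫ := by
      rw [real_inner_comm]; exact hHmin e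
    have h4 : ⟪Hmap xstar e, e⟫ - ⟪Hmap x e, e⟫ ≤ Γ * ‖d‖ * ‖e‖ ^ 2 := by
      have h5 : ⟪Hmap xstar e, e⟫ - ⟪Hmap x e, e⟫ = ⟪(Hmap xstar - Hmap x) e, e⟫ := by
        simp [inner_sub_left]
      rw [h5]
      calc ⟪(Hmap xstar - Hmap x) e, e⟫ ≤ ‖(Hmap xstar - Hmap x) e‖ * ‖e‖ :=
            real_inner_le_norm _ _
        _ ≤ (‖Hmap xstar - Hmap x‖ * ‖e‖) * ‖e‖ :=
            mul_le_mul_of_nonneg_right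
              (ContinuousLinearMap.le_opNorm _ _) (norm_nonneg e)
        _ ≤ ((Γ * ‖d‖) * ‖e‖) * ‖e‖ := by
            apply mul_le_mul_of_nonneg_right _ (norm_nonneg e)
            apply mul_le_mul_of_nonneg_right _ (norm_nonneg e)
            rw [norm_sub_rev]
            exact hHlip x hxD
        _ = Γ * ‖d‖ * ‖e‖ ^ 2 := by ring
    have h6 : Γ * ‖d‖ ≤ μs / 2 := by
      calc Γ * ‖d‖ ≤ Γ * (μs / (2 * Γ)) := by
            apply mul_le_mul_of_nonneg_left hclose (le_of_lt hΓ)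
        _ = μs / 2 := by field_simp
    have h7 := mul_le_mul_of_nonneg_right h6 (sq_nonneg ‖e‖)
    linarith
  -- conclusion
  rcases eq_or_lt_of_le (norm_nonneg e) with hez | hez
  · rw [← hez]
    positivity
  · have hkey : μs / 2 * ‖e‖ ^ 2
        ≤ ‖gradF xstar - g xstar‖ * ‖e‖ + (T / 2 * ‖d‖ ^ 2) * ‖e‖ :=
      le_trans hA_low hA_up
    have h9 : μs * ‖e‖ * ‖e‖
        ≤ (2 * ‖gradF xstar - g xstar‖ + T * ‖d‖ ^ 2) * ‖e‖ := by nlinarith [hkey]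
    have h7 : μs * ‖e‖ ≤ 2 * ‖gradF xstar - g xstar‖ + T * ‖d‖ ^ 2 :=
      le_of_mul_le_mul_right h9 hez
    have h8 : ‖e‖ ≤ (2 * ‖gradF xstar - g xstar‖ + T * ‖d‖ ^ 2) / μs :=
      (le_div_iff₀' hμs).mpr h7
    calc ‖e‖ ≤ (2 * ‖gradF xstar - g xstar‖ + T * ‖d‖ ^ 2) / μs := h8
      _ = 2 * ‖gradF xstar - g xstar‖ / μs + (T / μs) * ‖d‖ ^ 2 := by
          rw [div_mul_eq_mul_div, ← add_div]
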